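/- Let G be a connected graph, T a rooted spanning tree of G, v a vertex with open children v₁,…,v_t in T. Then the boundary of v satisfies δ(v) ⊆ δ(v₁) ∪ … ∪ δ(v_t) ∪ {v} ∪ N_G(v). -/

import Mathlib

open SimpleGraph

variable {V : Type*}

/-- Vertex set of the subtree of `T` (rooted at `r`) rooted at `w`. -/
def subtreeSet (T : SimpleGraph V) (r w : V) : Set V :=
  {u | ∀ p : T.Walk r u, p.IsPath → w ∈ p.support}

/-- The boundary `δ(w)`: endpoints of edges of `G` with exactly one endpoint
in the subtree of `T` rooted at `w`. -/
def bd (G T : SimpleGraph V) (r w : V) : Set V :=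
  {x | ∃ y, G.Adj x y ∧
    ((x ∈ subtreeSet T r w ∧ y ∉ subtreeSet T r w) ∨
     (x ∉ subtreeSet T r w ∧ y ∈ subtreeSet T r w))}

/-- `w` is a child of `v` in the tree `T` rooted at `r`. -/
def IsChild (T : SimpleGraph V) (r v w : V) : Prop :=
  T.Adj v w ∧ v ∉ subtreeSet T r w

/-- Edges of `G` with exactly one endpoint in the subtree rooted at `w`. -/
def crossEdges (G T : SimpleGraph V) (r w : V) : Set (Sym2 V) :=
  {e | e ∈ G.edgeSet ∧
    ∃ x y : V, e = s(x, y) ∧ x ∈ subtreeSet T r w ∧ y ∉ subtreeSet T r w}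

/-- A child `w` of `v` is open if there are at least two edges of `G`
between the subtree rooted at `w` and its complement. -/
def IsOpenChild (G T : SimpleGraph V) [Fintype V] (r v w : V) : Prop :=
  IsChild T r v w ∧ 2 ≤ (crossEdges G T r w).ncard

lemma self_mem_subtreeSet (T : SimpleGraph V) (r v : V) : v ∈ subtreeSet T r v :=
  fun p _ => p.end_mem_support

lemma child_subtreeSet_subset {T : SimpleGraph V} (hTree : T.IsTree) {r v w : V}
    (h : IsChild T r v w) : subtreeSet T r w ⊆ subtreeSet T r v := by
  classical
  obtain ⟨hadj, hv⟩ := h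
  -- there is a path from r to v avoiding w
  simp only [subtreeSet, Set.mem_setOf_eq, not_forall] at hv
  obtain ⟨p₀, hp₀, hw₀⟩ := hv
  intro u hu p hp
  have hwp : w ∈ p.support := hu p hp
  -- the initial segment of p up to w
  have hq : (p.takeUntil w hwp).IsPath := hp.takeUntil hwp
  -- the canonical path from r to w through v
  let q' : T.Walk r w := (Walk.cons hadj.symm p₀.reverse).reverse
  have hq' : q'.IsPath := by
    apply Walk.IsPath.reverse
    apply hp₀.reverse.cons
    simpa using hw₀
  have huniq := hTree.existsUnique_path r w
  obtain ⟨q₀, -, hunq⟩ := huniq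
  have h1 : p.takeUntil w hwp = q' := (hunq _ hq).trans (hunq _ hq').symm
  have hvq : v ∈ (p.takeUntil w hwp).support := by
    rw [h1]
    simp [q', Walk.support_reverse]
  exact p.support_takeUntil_subset hwp hvq

lemma exists_child {T : SimpleGraph V} (hTree : T.IsTree) {r v x : V}
    (hx : x ∈ subtreeSet T r v) (hxv : x ≠ v) :
    ∃ w, IsChild T r v w ∧ x ∈ subtreeSet T r w := by
  classical
  obtain ⟨p, hp, hunp⟩ := hTree.existsUnique_path r x
  have hvp : v ∈ p.support := hx p hp
  have hdrop : (p.dropUntil v hvp).IsPath := hp.dropUntil hvp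
  have htake : (p.takeUntil v hvp).IsPath := hp.takeUntil hvp
  -- the drop part is a nontrivial path from v to x
  cases hq : p.dropUntil v hvp with
  | nil => exact absurd rfl hxv
  | cons hadj q' =>
    rename_i w
    refine ⟨w, ⟨hadj, ?_⟩, ?_⟩
    · -- v ∉ subtreeSet T r w : takeUntil avoids w
      simp only [subtreeSet, Set.mem_setOf_eq, not_forall]
      refine ⟨p.takeUntil v hvp, htake, ?_⟩
      -- support of p is nodup, w is in the tail part
      have hnd := hp.support_nodup
      rw [← p.take_spec hvp] at hnd
      rw [Walk.support_append, List.nodup_append] at hnd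
      intro hwmem
      exact hnd.2.2 w hwmem w (by rw [hq]; simp) rfl
    · -- x ∈ subtreeSet T r w
      intro p₂ hp₂
      have : p₂ = p := (hunp _ hp₂).trans (hunp _ hp).symm
      rw [this]
      apply p.support_dropUntil_subset hvp
      rw [hq]; simp

theorem stmt6 [Fintype V] (G T : SimpleGraph V) (r : V)
    (hG : G.Connected) (hT : T ≤ G) (hTree : T.IsTree) (v : V) :
    bd G T r v ⊆
      (⋃ w ∈ {w : V | IsOpenChild G T r v w}, bd G T r w) ∪ {v} ∪ G.neighborSet v := by
  classical
  intro x hx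
  obtain ⟨y, hxy, hcase⟩ := hx
  by_cases hxv : x = v
  · exact Or.inl (Or.inr (by simp [hxv]))
  by_cases hxN : G.Adj v x
  · exact Or.inr ((G.mem_neighborSet v x).2 hxN)
  -- helper: show openness of a child given a cross edge distinct from the tree edge
  have key : ∀ a b : V, G.Adj a b → a ∈ subtreeSet T r v → a ≠ v → b ∉ subtreeSet T r v →
      ∃ w, IsOpenChild G T r v w ∧ a ∈ subtreeSet T r w ∧ b ∉ subtreeSet T r w := by
    intro a b hab ha hav hb
    obtain ⟨w, hw, haw⟩ := exists_child hTree ha hav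
    have hsub := child_subtreeSet_subset hTree hw
    have hbw : b ∉ subtreeSet T r w := fun h => hb (hsub h)
    have hvw : v ∉ subtreeSet T r w := hw.2
    have hbv : b ≠ v := fun h => hb (h ▸ self_mem_subtreeSet T r v)
    have hab' : s(a, b) ∈ crossEdges G T r w := ⟨hab, a, b, rfl, haw, hbw⟩
    have hwv : s(w, v) ∈ crossEdges G T r w :=
      ⟨hT hw.1.symm, w, v, rfl, self_mem_subtreeSet T r w, hvw⟩
    have hne : s(a, b) ≠ s(w, v) := by
      intro h
      rw [Sym2.eq_iff] at h
      rcases h with ⟨rfl, rfl⟩ | ⟨rfl, rfl⟩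
      · exact hbv rfl
      · exact hav rfl
    have hcard : 2 ≤ (crossEdges G T r w).ncard := by
      rw [show (2 : ℕ) = 1 + 1 from rfl, Nat.add_one_le_iff]
      exact (Set.one_lt_ncard (Set.toFinite _)).2 ⟨_, hab', _, hwv, hne⟩
    exact ⟨w, ⟨hw, hcard⟩, haw, hbw⟩
  rcases hcase with ⟨hxin, hyout⟩ | ⟨hxout, hyin⟩
  · obtain ⟨w, hopen, hxw, hyw⟩ := key x y hxy hxin hxv hyout
    exact Or.inl (Or.inl (Set.mem_biUnion hopen ⟨y, hxy, Or.inl ⟨hxw, hyw⟩⟩))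
  · -- y in subtree, x out; if y = v then x adjacent to v, contradiction
    by_cases hyv : y = v
    · exact absurd (hyv ▸ hxy.symm) hxN
    obtain ⟨w, hopen, hyw, hxw⟩ := key y x hxy.symm hyin hyv hxout
    exact Or.inl (Or.inl (Set.mem_biUnion hopen ⟨y, hxy, Or.inr ⟨hxw, hyw⟩⟩))
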